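/- arXiv:2311.12479 — 2 statements merged into one kernel-verified Lean document; each statement's English description precedes it below -/
import Mathlib

section
/- The generator t_{m+n+1,m+n+1}^{(1)} is central in X(osp_{2n+1|2m}); that is, it commutes with t_{kl}^{(r)} for all 1 ≤ k,l ≤ N and all r ≥ 1. -/
open scoped BigOperators

namespace OspYangianB

noncomputable section

/-- `N = 2m + 2n + 1`. -/
def NN (m n : ℕ) : ℕ := 2 * m + 2 * n + 1

lemma NN_pos (m n : ℕ) : 0 < NN m n := by unfold NN; omega

/-- `κ = n - m - 1/2`. -/
def kap (m n : ℕ) : ℂ := (n : ℂ) - (m : ℂ) - 1 / 2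

/-- the parity `p(i)` of a (1-based) index `i ∈ {1, …, N}`. -/
def parN (m n i : ℕ) : ℕ := if i ≤ m ∨ NN m n + 1 - m ≤ i then 1 else 0

/-- the sign `θ_i` attached to a (1-based) index `i ∈ {1, …, N}`. -/
def thN (m n i : ℕ) : ℂ := if NN m n + 1 - m ≤ i then -1 else 1

/-- the involution `i ↦ i′ = N + 1 - i` on (1-based) indices. -/
def prN (m n i : ℕ) : ℕ := NN m n + 1 - i

/-- conversion of a 1-based index `i ∈ {1, …, N}` into an element of `Fin (NN m n)`. -/
def fi (m n : ℕ) (i : ℕ) : Fin (NN m n) := ⟨(i - 1) % NN m n, Nat.mod_lt _ (NN_pos m n)⟩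

/-- the parity `p` on `Fin (NN m n)`. -/
def par (m n : ℕ) (i : Fin (NN m n)) : ℕ := parN m n ((i : ℕ) + 1)

/-- the sign `θ` on `Fin (NN m n)`. -/
def th (m n : ℕ) (i : Fin (NN m n)) : ℂ := thN m n ((i : ℕ) + 1)

/-- the involution `i ↦ i′` on `Fin (NN m n)`. -/
def pr (m n : ℕ) (i : Fin (NN m n)) : Fin (NN m n) := fi m n (prN m n ((i : ℕ) + 1))

/-- the free algebra on the generators `t_{ij}^{(r)}`, `1 ≤ i, j ≤ N`, `r ≥ 1`
(the last component of the index triple is `r - 1`). -/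
abbrev FA (m n : ℕ) := FreeAlgebra ℂ (Fin (NN m n) × Fin (NN m n) × ℕ)

/-- the coefficient of `u^{-a}` in the series `t_{ij}(u)`, inside the free algebra;
`a = 0` gives `δ_{ij}` and `a = r ≥ 1` gives the generator `t_{ij}^{(r)}`. -/
def tcF (m n : ℕ) (i j : Fin (NN m n)) : ℕ → FA m n
  | 0 => if i = j then 1 else 0
  | a + 1 => FreeAlgebra.ι ℂ (i, j, a)

/-- the coefficient of `u^{-a} v^{-b}` on the left-hand side of the defining relation
indexed by `(i, j, k, l)`. -/
def relLHS (m n : ℕ) (i j k l : Fin (NN m n)) (a b : ℕ) : FA m n :=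
  tcF m n i j a * tcF m n k l b -
    ((-1 : ℂ)) ^ ((par m n i + par m n j) * (par m n k + par m n l)) •
      (tcF m n k l b * tcF m n i j a)

/-- the coefficient of `u^{-a} v^{-b}` on the right-hand side of the defining relation
indexed by `(i, j, k, l)`, where `(u - v)⁻¹` is expanded as `Σ_{s ≥ 0} v^s u^{-s-1}`
and `(u - v - κ)⁻¹` as `Σ_{s ≥ 0} (v + κ)^s u^{-s-1}`. -/
def relRHS (m n : ℕ) (i j k l : Fin (NN m n)) (a b : ℕ) : FA m n :=
  ((-1 : ℂ)) ^ (par m n i * par m n j + par m n i * par m n k + par m n j * par m n k) •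
      ∑ s ∈ Finset.range a,
        (tcF m n k j (a - 1 - s) * tcF m n i l (b + s) -
          tcF m n k j (b + s) * tcF m n i l (a - 1 - s))
  - (if k = pr m n i then
      ∑ s ∈ Finset.range a, ∑ t ∈ Finset.range (s + 1),
        ((s.choose t : ℂ) * kap m n ^ (s - t)) •
          ∑ q : Fin (NN m n),
            (((-1 : ℂ)) ^ (par m n i + par m n i * par m n j + par m n j * par m n q) *
                th m n i * th m n q) •
              (tcF m n q j (a - 1 - s) * tcF m n (pr m n q) l (b + t))
    else 0)
  + (if l = pr m n j then
      ∑ s ∈ Finset.range a, ∑ t ∈ Finset.range (s + 1),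
        ((s.choose t : ℂ) * kap m n ^ (s - t)) •
          ∑ q : Fin (NN m n),
            (((-1 : ℂ)) ^ (par m n i * par m n k + par m n j * par m n k +
                  par m n i * par m n q) *
                th m n (pr m n j) * th m n (pr m n q)) •
              (tcF m n k (pr m n q) (b + t) * tcF m n i q (a - 1 - s))
    else 0)

/-- the defining relations of the extended Yangian `X(osp_{2n+1|2m})`:
the coefficients of every monomial `u^{-a} v^{-b}` on the two sides agree. -/
inductive yrel (m n : ℕ) : FA m n → FA m n → Prop
  | intro (i j k l : Fin (NN m n)) (a b : ℕ) :
      yrel m n (relLHS m n i j k l a b) (relRHS m n i j k l a b)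

/-- the extended Yangian `X(osp_{2n+1|2m})`. -/
abbrev XA (m n : ℕ) := RingQuot (yrel m n)

/-- the coefficient of `u^{-a}` in `t_{ij}(u)` inside the extended Yangian, with
1-based indices `i, j ∈ {1, …, N}`; `a = 0` gives `δ_{ij}` and `a = r ≥ 1` gives
the generator `t_{ij}^{(r)}`. -/
def tg (m n : ℕ) (i j : ℕ) (a : ℕ) : XA m n :=
  RingQuot.mkAlgHom ℂ (yrel m n) (tcF m n (fi m n i) (fi m n j) a)

/-- the generating set of the left ideal defining the Verma module `M(λ(u))`,
where `lam i ∈ ℂ[[u⁻¹]]` is the series `λ_i(u)`, with 1-based index `i`. -/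
def vermaGens (m n : ℕ) (lam : ℕ → PowerSeries ℂ) : Set (XA m n) :=
  {x | ∃ i j r : ℕ, 1 ≤ i ∧ i < j ∧ j ≤ NN m n ∧ 1 ≤ r ∧ x = tg m n i j r} ∪
  {x | ∃ i r : ℕ, 1 ≤ i ∧ i ≤ m + n + 1 ∧ 1 ≤ r ∧
      x = tg m n i i r - algebraMap ℂ (XA m n) (PowerSeries.coeff r (lam i))}

/-- the left ideal defining the Verma module `M(λ(u))`. -/
def vermaIdeal (m n : ℕ) (lam : ℕ → PowerSeries ℂ) : Submodule (XA m n) (XA m n) :=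
  Submodule.span (XA m n) (vermaGens m n lam)

/-- the Verma module `M(λ(u))`. -/
abbrev Verma (m n : ℕ) (lam : ℕ → PowerSeries ℂ) := XA m n ⧸ vermaIdeal m n lam

/-- the image of `1`, the highest vector of the Verma module. -/
def vermaHV (m n : ℕ) (lam : ℕ → PowerSeries ℂ) : Verma m n lam :=
  Submodule.Quotient.mk 1

/-- the sum of all submodules of `M(λ(u))` not containing the highest vector. -/
def maxSub (m n : ℕ) (lam : ℕ → PowerSeries ℂ) : Submodule (XA m n) (Verma m n lam) :=
  sSup {W | vermaHV m n lam ∉ W}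

/-- the irreducible highest weight module `L(λ(u))`. -/
abbrev Lmod (m n : ℕ) (lam : ℕ → PowerSeries ℂ) := Verma m n lam ⧸ maxSub m n lam

/-- the highest vector `ξ` of `L(λ(u))`. -/
def xi (m n : ℕ) (lam : ℕ → PowerSeries ℂ) : Lmod m n lam :=
  Submodule.Quotient.mk (vermaHV m n lam)

/-- the product `∏_{i=1}^{p} (1 + a_i u⁻¹)` as a power series in `u⁻¹`. -/
def linProd {p : ℕ} (a : Fin p → ℂ) : PowerSeries ℂ :=
  ∏ i, (1 + PowerSeries.C (a i) * PowerSeries.X)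

/-- the substitution `f(u) ↦ f(u + c)` on power series in `u⁻¹`, where
`(u+c)^{-r} = Σ_{k ≥ 0} C(r+k-1, k) (-c)^k u^{-r-k}`. -/
def shiftPS (c : ℂ) (f : PowerSeries ℂ) : PowerSeries ℂ :=
  PowerSeries.mk fun s =>
    if s = 0 then PowerSeries.constantCoeff f
    else ∑ r ∈ Finset.Icc 1 s,
      ((s - 1).choose (s - r) : ℂ) * (-c) ^ (s - r) * PowerSeries.coeff r f

/-- the odd reflection: `(α, β)` reflects to `(βt, αt)`. -/
def Reflects (α β βt αt : PowerSeries ℂ) : Prop :=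
  ∃ (p : ℕ) (a b : Fin p → ℂ) (γ : PowerSeries ℂ),
    PowerSeries.constantCoeff γ = 1 ∧
    (∀ i j, a i ≠ b j) ∧
    α = γ * linProd a ∧ β = γ * linProd b ∧
    αt = γ * linProd (fun i => a i + 1) ∧ βt = γ * linProd (fun i => b i + 1)

/-- `u^{-d} · P(u)` as a power series in `u⁻¹`. -/
def polyRev (P : Polynomial ℂ) (d : ℕ) : PowerSeries ℂ :=
  PowerSeries.mk fun r => if r ≤ d then P.coeff (d - r) else 0

/-- the condition `f(u) · P(u) = g(u) · P(u + c)` in `ℂ[[u⁻¹]][u]`, expressed after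
multiplication of both sides by `u^{-deg P}`. -/
def PolyCond (f g : PowerSeries ℂ) (P : Polynomial ℂ) (c : ℂ) : Prop :=
  f * polyRev P P.natDegree =
    g * polyRev (P.comp (Polynomial.X + Polynomial.C c)) P.natDegree

/-- conditions (★) on the highest weight tuple `λ(u) = (λ_1(u), …, λ_{m+n+1}(u))`;
`lamM i` stands for `λ_m^{[i]}(u)` (for `1 ≤ i ≤ n`) and `lamR i` for `λ_{m+i}^{[1]}(u)`. -/
def Star (m n : ℕ) (lam : ℕ → PowerSeries ℂ) : Prop :=
  ∃ (P : ℕ → Polynomial ℂ) (lamM lamR : ℕ → PowerSeries ℂ),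
    (∀ i, 1 ≤ i → i ≤ m + n → (P i).Monic) ∧
    (∀ i, 1 ≤ i → i ≤ n → PowerSeries.constantCoeff (lamM i) = 1) ∧
    (∀ i, 1 ≤ i → i ≤ n → PowerSeries.constantCoeff (lamR i) = 1) ∧
    Reflects (lam m) (lam (m + 1)) (lamR 1) (lamM 1) ∧
    (∀ i, 1 ≤ i → i ≤ n - 1 →
      Reflects (lamM i) (lam (m + i + 1)) (lamR (i + 1)) (lamM (i + 1))) ∧
    (∀ i, 1 ≤ i → i ≤ m - 1 → PolyCond (lam (i + 1)) (lam i) (P i) 1) ∧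
    (∀ j, m + 1 ≤ j → j ≤ m + n - 1 → PolyCond (lam j) (lam (j + 1)) (P j) 1) ∧
    PolyCond (lam (m + n)) (lam (m + n + 1)) (P (m + n)) (1 / 2) ∧
    PolyCond (lam (m + n + 1)) (lamM n) (P m) 1

/-- `c_i = -n + m + 1/2 + Σ_{k=1}^{i} (-1)^{p(k)}`. -/
def ci (m n i : ℕ) : ℂ :=
  -(n : ℂ) + (m : ℂ) + 1 / 2 + ∑ k ∈ Finset.Icc 1 i, ((-1 : ℂ)) ^ parN m n k

/-- the coefficient of `u^{-s}` in the shifted series `t_{ij}(u + c)` (1-based indices). -/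
def tgShift (m n : ℕ) (c : ℂ) (i j : ℕ) (s : ℕ) : XA m n :=
  if s = 0 then tg m n i j 0
  else ∑ e ∈ Finset.Icc 1 s, (((s - 1).choose (s - e) : ℂ) * (-c) ^ (s - e)) • tg m n i j e

/-- the coefficient of `u^{-r}` in the series
`Σ_{q=1}^{N} t_{1′q}(u - κ) · t_{1q′}(u) · (-1)^{p(q)} θ_q`. -/
def centralCoeff (m n : ℕ) (r : ℕ) : XA m n :=
  ∑ q ∈ Finset.Icc 1 (NN m n),
    (((-1 : ℂ)) ^ parN m n q * thN m n q) •
      ∑ s ∈ Finset.range (r + 1),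
        tgShift m n (-(kap m n)) (prN m n 1) q s * tg m n 1 (prN m n q) (r - s)

/-- the highest weight `λ°(u)` of the module `L°`:
`λ°_i(u) = 1 - n u⁻¹` for `i = 1, …, m`, `λ°_i(u) = 1 + (1/2) u⁻¹` for
`i = m+1, …, m+n`, and `λ°_{m+n+1}(u) = 1`. -/
def lamCirc (m n : ℕ) (i : ℕ) : PowerSeries ℂ :=
  if i ≤ m then 1 - PowerSeries.C (n : ℂ) * PowerSeries.X
  else if i ≤ m + n then 1 + PowerSeries.C (1 / 2 : ℂ) * PowerSeries.X
  else 1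

/-- the generating series `t_{ij}(u)` as a power series in `u⁻¹` with coefficients
in the extended Yangian (1-based indices). -/
def tser (m n : ℕ) (i j : ℕ) : PowerSeries (XA m n) :=
  PowerSeries.mk fun a => tg m n i j a

/-- the image of the generator `t_{ij}^{(r)}` (1-based indices) under the vector
representation: `δ_{r,1} (-1)^{p(i)} E_{ij} - (-κ)^{r-1} (-1)^{p(i)p(j)} θ_i θ_j E_{j′i′}`. -/
def vecRepMat (m n : ℕ) (i j r : ℕ) : Matrix (Fin (NN m n)) (Fin (NN m n)) ℂ :=
  (if r = 1 then ((-1 : ℂ)) ^ parN m n i else 0) •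
      Matrix.single (fi m n i) (fi m n j) (1 : ℂ)
  - ((-(kap m n)) ^ (r - 1) * ((-1 : ℂ)) ^ (parN m n i * parN m n j) *
        thN m n i * thN m n j) •
      Matrix.single (fi m n (prN m n j)) (fi m n (prN m n i)) (1 : ℂ)

/-- a complex number is a nonnegative integer. -/
def IsNonnegInt (x : ℂ) : Prop := ∃ k : ℕ, x = (k : ℂ)

end

end OspYangianB

namespace OspYangianB

noncomputable section

lemma fi_mid_val (m n : ℕ) : ((fi m n (m + n + 1)) : ℕ) = m + n := by
  show (m + n + 1 - 1) % NN m n = m + n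
  have h1 : m + n + 1 - 1 = m + n := by omega
  rw [h1, Nat.mod_eq_of_lt]
  unfold NN; omega

lemma par_mid (m n : ℕ) : par m n (fi m n (m + n + 1)) = 0 := by
  unfold par parN
  rw [fi_mid_val]
  have : ¬(m + n + 1 ≤ m ∨ NN m n + 1 - m ≤ m + n + 1) := by unfold NN; omega
  rw [if_neg this]

lemma th_mid (m n : ℕ) : th m n (fi m n (m + n + 1)) = 1 := by
  unfold th thN
  rw [fi_mid_val]
  have : ¬(NN m n + 1 - m ≤ m + n + 1) := by unfold NN; omega
  rw [if_neg this]

lemma pr_mid (m n : ℕ) : pr m n (fi m n (m + n + 1)) = fi m n (m + n + 1) := by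
  unfold pr prN
  rw [fi_mid_val]
  have h : NN m n + 1 - (m + n + 1) = m + n + 1 := by unfold NN; omega
  rw [h]

lemma relRHS_mid (m n : ℕ) (K L : Fin (NN m n)) (r : ℕ) :
    relRHS m n (fi m n (m + n + 1)) (fi m n (m + n + 1)) K L 1 r = 0 := by
  set c := fi m n (m + n + 1) with hc
  have hp : par m n c = 0 := par_mid m n
  have hpr : pr m n c = c := pr_mid m n
  have hth : th m n c = 1 := th_mid m n
  unfold relRHS
  rw [hpr, hp, hth]
  have htc0 : ∀ i j : Fin (NN m n), tcF m n i j 0 = if i = j then 1 else 0 := by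
    intro i j; rfl
  simp only [Finset.sum_range_one, Finset.sum_range_succ, Finset.sum_range_zero,
    Nat.sub_self, Nat.zero_sub, Nat.add_zero, Nat.choose_self, Nat.cast_one,
    pow_zero, one_mul, mul_zero, zero_mul, mul_one, zero_add, add_zero,
    Nat.sub_zero, zero_smul, one_smul, htc0, ite_mul, mul_ite, smul_ite,
    smul_zero, Finset.sum_ite_eq, Finset.sum_ite_eq', Finset.mem_univ, if_true,
    hpr, hth]
  have h4 : (if L = c then tcF m n K c r else 0 : FA m n) =
      (if c = L then tcF m n K c r else 0) := by
    by_cases h : c = L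
    · rw [if_pos h, if_pos h.symm]
    · rw [if_neg h, if_neg fun hh => h hh.symm]
  rw [h4]
  abel

end

end OspYangianB

open OspYangianB in
/-- the generator `t_{m+n+1,m+n+1}^{(1)}` is central in the extended
Yangian `X(osp_{2n+1|2m})`. -/
theorem middle_diagonal_generator_is_central (m n : ℕ) (hm : 1 ≤ m) (hn : 1 ≤ n) :
    ∀ k l, 1 ≤ k → k ≤ NN m n → 1 ≤ l → l ≤ NN m n → ∀ r, 1 ≤ r →
      tg m n (m + n + 1) (m + n + 1) 1 * tg m n k l r =
        tg m n k l r * tg m n (m + n + 1) (m + n + 1) 1 := by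
  intro k l _ _ _ _ r _
  have h := RingQuot.mkAlgHom_rel ℂ
    (yrel.intro (m := m) (n := n) (fi m n (m + n + 1)) (fi m n (m + n + 1))
      (fi m n k) (fi m n l) 1 r)
  rw [relRHS_mid, map_zero] at h
  unfold relLHS at h
  rw [par_mid] at h
  simp only [add_zero, zero_mul, pow_zero, one_smul, map_sub, map_mul] at h
  have h' := sub_eq_zero.mp h
  simpa only [tg] using h'
end

section
/- Let p ≥ 1 be an integer, c a nonzero complex number, and λ_1,…,λ_p, μ_1,…,μ_p complex numbers. Suppose there exists a monic polynomial P ∈ ℂ[u] such that Π_{a=1}^{p}(u+μ_a)·P(u) = Π_{a=1}^{p}(u+λ_a)·P(u+c) as polynomials in ℂ[u]. Then there is a permutation σ of {1,…,p} such that μ_{σ(a)} − λ_a ∈ c·ℤ≥0 for every a = 1,…,p, i.e., each difference μ_{σ(a)} − λ_a is a nonnegative integer multiple of c. -/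
open scoped BigOperators

open Polynomial

private lemma ren_add_cons {α : Type*} (s t : Multiset α) (a : α) :
    s + a ::ₘ t = a ::ₘ (s + t) := by
  rw [add_comm, Multiset.cons_add, add_comm]

/-- chain-following auxiliary lemma -/
private lemma ren_aux_chain (c : ℂ) (S : Multiset ℂ) :
    ∀ (M L : Multiset ℂ) (z : ℂ),
      M + S = L + z ::ₘ S.map (fun x => x - c) →
      ∃ m ∈ M, (∃ j : ℕ, z - m = (j : ℂ) * c) ∧
        ∃ S₂ : Multiset ℂ, M.erase m + S₂ = L + S₂.map (fun x => x - c) := by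
  induction S using Multiset.strongInductionOn with
  | _ S ih =>
    intro M L z heq
    have hz : z ∈ M + S := by
      rw [heq]; exact Multiset.mem_add.2 (Or.inr (Multiset.mem_cons_self _ _))
    rcases Multiset.mem_add.1 hz with hzM | hzS
    · refine ⟨z, hzM, ⟨0, by simp⟩, S, ?_⟩
      have hM : M = z ::ₘ M.erase z := (Multiset.cons_erase hzM).symm
      rw [hM, Multiset.cons_add, ren_add_cons] at heq
      exact (Multiset.cons_inj_right z).1 heq
    · have hS : S = z ::ₘ S.erase z := (Multiset.cons_erase hzS).symm
      rw [hS, Multiset.map_cons, ren_add_cons, ren_add_cons] at heq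
      have heq₁ : M + S.erase z
          = L + (z - c) ::ₘ (S.erase z).map (fun x => x - c) :=
        (Multiset.cons_inj_right z).1 heq
      obtain ⟨m, hm, ⟨j, hj⟩, S₂, h₂⟩ :=
        ih (S.erase z) (Multiset.erase_lt.2 hzS) M L (z - c) heq₁
      refine ⟨m, hm, ⟨j + 1, ?_⟩, S₂, h₂⟩
      push_cast
      linear_combination hj

private lemma ren_exists_top (c : ℂ) (hc : c ≠ 0) (S : Multiset ℂ) (hS : S ≠ 0) :
    ∃ s ∈ S, s + c ∉ S := by
  by_contra hcon
  push_neg at hcon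
  obtain ⟨s₀, hs₀⟩ := Multiset.exists_mem_of_ne_zero hS
  have hmem : ∀ k : ℕ, s₀ + (k : ℂ) * c ∈ S := by
    intro k
    induction k with
    | zero => simpa using hs₀
    | succ k ihk =>
        have h1 : s₀ + ((k : ℕ) + 1 : ℂ) * c = (s₀ + (k : ℂ) * c) + c := by ring
        push_cast
        rw [h1]
        exact hcon _ ihk
  have : Function.Injective
      (fun k : ℕ => (⟨s₀ + (k : ℂ) * c, Multiset.mem_toFinset.2 (hmem k)⟩ :
        {x // x ∈ S.toFinset})) := by
    intro k l hkl
    have h2 : s₀ + (k : ℂ) * c = s₀ + (l : ℂ) * c := congrArg Subtype.val hkl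
    have h4 : (k : ℂ) * c = (l : ℂ) * c := by linear_combination h2
    have h3 : (k : ℂ) = (l : ℂ) := mul_right_cancel₀ hc h4
    exact_mod_cast h3
  obtain ⟨k, l, hkl, hfe⟩ := Finite.exists_ne_map_eq_of_infinite
      (fun k : ℕ => (⟨s₀ + (k : ℂ) * c, Multiset.mem_toFinset.2 (hmem k)⟩ :
        {x // x ∈ S.toFinset}))
  exact hkl (this hfe)

private lemma ren_main_rel (c : ℂ) (hc : c ≠ 0) (L : Multiset ℂ) :
    ∀ (S M : Multiset ℂ),
      M + S = L + S.map (fun x => x - c) →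
      Multiset.Rel (fun x y => ∃ k : ℕ, x - y = (k : ℂ) * c) L M := by
  induction L using Multiset.strongInductionOn with
  | _ L ih =>
    intro S M heq
    by_cases hS : S = 0
    · subst hS
      simp only [Multiset.map_zero, add_zero] at heq
      subst heq
      exact Multiset.rel_refl_of_refl_on fun x _ => ⟨0, by simp⟩
    · obtain ⟨s, hsS, hsc⟩ := ren_exists_top c hc S hS
      have hsL : s ∈ L := by
        have h1 : s ∈ M + S := Multiset.mem_add.2 (Or.inr hsS)
        rw [heq] at h1
        rcases Multiset.mem_add.1 h1 with h | h
        · exact h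
        · exfalso
          obtain ⟨t, htS, hts⟩ := Multiset.mem_map.1 h
          have : t = s + c := by linear_combination hts
          exact hsc (this ▸ htS)
      have hS' : S = s ::ₘ S.erase s := (Multiset.cons_erase hsS).symm
      have hL' : L = s ::ₘ L.erase s := (Multiset.cons_erase hsL).symm
      have heqA := heq
      rw [hS', Multiset.map_cons] at heqA
      rw [hL'] at heqA
      rw [ren_add_cons, Multiset.cons_add] at heqA
      have heq₁ : M + S.erase s
          = L.erase s + (s - c) ::ₘ (S.erase s).map (fun x => x - c) :=
        (Multiset.cons_inj_right s).1 heqA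
      obtain ⟨m, hm, ⟨j, hj⟩, S₂, h₂⟩ := ren_aux_chain c (S.erase s) M (L.erase s) (s - c) heq₁
      have hrel : Multiset.Rel (fun x y => ∃ k : ℕ, x - y = (k : ℂ) * c)
          (L.erase s) (M.erase m) := ih (L.erase s) (Multiset.erase_lt.2 hsL) S₂ (M.erase m) h₂
      have : Multiset.Rel (fun x y => ∃ k : ℕ, x - y = (k : ℂ) * c)
          (s ::ₘ L.erase s) (m ::ₘ M.erase m) :=
        Multiset.Rel.cons ⟨j + 1, by push_cast; linear_combination hj⟩ hrel
      rwa [← hL', Multiset.cons_erase hm] at this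

private lemma ren_rel_exists_lists {α β : Type*} {R : α → β → Prop} {s : Multiset α}
    {t : Multiset β} (h : Multiset.Rel R s t) :
    ∃ (l₁ : List α) (l₂ : List β), s = ↑l₁ ∧ t = ↑l₂ ∧ List.Forall₂ R l₁ l₂ := by
  induction h with
  | zero => exact ⟨[], [], rfl, rfl, List.Forall₂.nil⟩
  | @cons a b as bs hab _ ihh =>
      obtain ⟨l₁, l₂, rfl, rfl, hf⟩ := ihh
      exact ⟨a :: l₁, b :: l₂, (Multiset.cons_coe a l₁).symm,
        (Multiset.cons_coe b l₂).symm, List.Forall₂.cons hab hf⟩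

private lemma ren_perm_of_rel {p : ℕ} (R : Fin p → Fin p → Prop)
    (h : Multiset.Rel R (Finset.univ : Finset (Fin p)).val (Finset.univ : Finset (Fin p)).val) :
    ∃ σ : Equiv.Perm (Fin p), ∀ a, R a (σ a) := by
  obtain ⟨l₁, l₂, h₁, h₂, hf⟩ := ren_rel_exists_lists h
  have nd₁ : l₁.Nodup := by
    have := (Finset.univ : Finset (Fin p)).nodup
    rw [h₁] at this; exact Multiset.coe_nodup.1 this
  have nd₂ : l₂.Nodup := by
    have := (Finset.univ : Finset (Fin p)).nodup
    rw [h₂] at this; exact Multiset.coe_nodup.1 this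
  have mem₁ : ∀ a : Fin p, a ∈ l₁ := fun a => by
    have : a ∈ (Finset.univ : Finset (Fin p)).val := Finset.mem_univ a
    rw [h₁] at this; exact Multiset.mem_coe.1 this
  have mem₂ : ∀ a : Fin p, a ∈ l₂ := fun a => by
    have : a ∈ (Finset.univ : Finset (Fin p)).val := Finset.mem_univ a
    rw [h₂] at this; exact Multiset.mem_coe.1 this
  have hlen : l₁.length = l₂.length := hf.length_eq
  set e₁ := List.Nodup.getEquivOfForallMemList l₁ nd₁ mem₁ with he₁
  set e₂ := List.Nodup.getEquivOfForallMemList l₂ nd₂ mem₂ with he₂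
  refine ⟨e₁.symm.trans ((finCongr hlen).trans e₂), fun a => ?_⟩
  have hi₂ : ((e₁.symm a : Fin l₁.length) : ℕ) < l₂.length := hlen ▸ (e₁.symm a).2
  have hR := hf.get (e₁.symm a).2 hi₂
  have hA : l₁.get ⟨(e₁.symm a : Fin l₁.length), (e₁.symm a).2⟩ = a := by
    have h5 := e₁.apply_symm_apply a
    rw [he₁, List.Nodup.getEquivOfForallMemList_apply] at h5
    exact h5
  have hB : (e₁.symm.trans ((finCongr hlen).trans e₂)) a
      = l₂.get ⟨(e₁.symm a : Fin l₁.length), hi₂⟩ := by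
    simp [he₂, List.Nodup.getEquivOfForallMemList, finCongr, Equiv.trans_apply]
  rw [hB]
  rw [hA] at hR
  exact hR


open OspYangianB in
/-- the renumbering principle: if
`Π(u + μ_a) · P(u) = Π(u + λ_a) · P(u + c)` for a monic polynomial `P` and `c ≠ 0`,
then after a permutation each difference `μ_{σ(a)} - λ_a` lies in `c·ℤ≥0`. -/
theorem renumbering_principle (p : ℕ) (hp : 1 ≤ p) (c : ℂ) (hc : c ≠ 0)
    (la mu : Fin p → ℂ) (P : Polynomial ℂ) (hP : P.Monic)
    (h : (∏ a, (Polynomial.X + Polynomial.C (mu a))) * P =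
        (∏ a, (Polynomial.X + Polynomial.C (la a))) *
          P.comp (Polynomial.X + Polynomial.C c)) :
    ∃ σ : Equiv.Perm (Fin p), ∀ a, ∃ k : ℕ, mu (σ a) - la a = (k : ℂ) * c := by
    classical
  have hsplit : P = (P.roots.map fun r => Polynomial.X - Polynomial.C r).prod :=
    (IsAlgClosed.splits P).eq_prod_roots_of_monic hP
  have hcomp : P.comp (Polynomial.X + Polynomial.C c)
      = ((P.roots.map (fun x => x - c)).map fun r => Polynomial.X - Polynomial.C r).prod := by
    conv_lhs => rw [hsplit]
    rw [Polynomial.multiset_prod_comp, Multiset.map_map, Multiset.map_map]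
    congr 1
    apply Multiset.map_congr rfl
    intro r _
    simp only [Function.comp_apply, Polynomial.sub_comp, Polynomial.X_comp,
      Polynomial.C_comp, map_sub]
    ring
  have hL1 : (∏ a, (Polynomial.X + Polynomial.C (mu a)))
      = (((Finset.univ : Finset (Fin p)).val.map fun a => -mu a).map
          fun r => Polynomial.X - Polynomial.C r).prod := by
    rw [Finset.prod_eq_multiset_prod, Multiset.map_map]
    apply congrArg
    apply Multiset.map_congr rfl
    intro a _
    simp only [Function.comp_apply, map_neg, sub_neg_eq_add]
  have hL2 : (∏ a, (Polynomial.X + Polynomial.C (la a)))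
      = (((Finset.univ : Finset (Fin p)).val.map fun a => -la a).map
          fun r => Polynomial.X - Polynomial.C r).prod := by
    rw [Finset.prod_eq_multiset_prod, Multiset.map_map]
    apply congrArg
    apply Multiset.map_congr rfl
    intro a _
    simp only [Function.comp_apply, map_neg, sub_neg_eq_add]
  have hprod : ((((Finset.univ : Finset (Fin p)).val.map fun a => -mu a) + P.roots).map
        fun r => Polynomial.X - Polynomial.C r).prod
      = ((((Finset.univ : Finset (Fin p)).val.map fun a => -la a)
          + P.roots.map (fun x => x - c)).map fun r => Polynomial.X - Polynomial.C r).prod := by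
    rw [Multiset.map_add, Multiset.map_add, Multiset.prod_add, Multiset.prod_add,
      ← hL1, ← hL2, ← hsplit, ← hcomp]
    exact h
  have hroots : ((Finset.univ : Finset (Fin p)).val.map fun a => -mu a) + P.roots
      = ((Finset.univ : Finset (Fin p)).val.map fun a => -la a)
        + P.roots.map (fun x => x - c) := by
    have h6 := congrArg Polynomial.roots hprod
    rwa [Polynomial.roots_multiset_prod_X_sub_C, Polynomial.roots_multiset_prod_X_sub_C] at h6
  have hrel := ren_main_rel c hc ((Finset.univ : Finset (Fin p)).val.map fun a => -la a)
      P.roots ((Finset.univ : Finset (Fin p)).val.map fun a => -mu a) hroots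
  rw [Multiset.rel_map] at hrel
  obtain ⟨σ, hσ⟩ := ren_perm_of_rel _ hrel
  refine ⟨σ, fun a => ?_⟩
  obtain ⟨k, hk⟩ := hσ a
  exact ⟨k, by linear_combination hk⟩
end
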